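/- For q in (0,1) and n >= 2, let w be Mallows distributed on S_n. Then Cov(des(w), des(w^{-1})) = (q/(1+q) - q^2/(1+q)^2) * sum_{i,j in [n-1]} P({w(i), w(i+1)} = {j, j+1}); in particular, since each summand is non-negative, Cov(des(w), des(w^{-1})) >= 0. -/

import Mathlib

/-- Number of inversions of a permutation of `Fin n`. -/
def invCount (n : ℕ) (w : Equiv.Perm (Fin n)) : ℕ :=
  (Finset.univ.filter (fun p : Fin n × Fin n => p.1 < p.2 ∧ w p.2 < w p.1)).card

/-- The q-factorial `[m]_q! = ∏_{i=1}^m (1 + q + ⋯ + q^{i-1})`. -/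
noncomputable def qFactorial (q : ℝ) (m : ℕ) : ℝ :=
  ∏ i ∈ Finset.Icc 1 m, (∑ j ∈ Finset.range i, q ^ j)

/-- The Mallows probability of `w`: `q^{l(w)} / [n]_q!`. -/
noncomputable def mallows (q : ℝ) (n : ℕ) (w : Equiv.Perm (Fin n)) : ℝ :=
  q ^ invCount n w / qFactorial q n

/-- Number of descents of a permutation of `Fin n`: positions `i` (0-based) with a
successor `j = i+1` such that `w j < w i`. -/
def desCount (n : ℕ) (w : Equiv.Perm (Fin n)) : ℕ :=
  (Finset.univ.filter
    (fun p : Fin n × Fin n => (p.2 : ℕ) = (p.1 : ℕ) + 1 ∧ w p.2 < w p.1)).card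


open Finset Equiv

lemma swap_lt_swap_iff {n : ℕ} {i1 i2 : Fin n} (hi : (i2 : ℕ) = (i1 : ℕ) + 1)
    {a b : Fin n} (h : ¬((a = i1 ∨ a = i2) ∧ (b = i1 ∨ b = i2))) :
    Equiv.swap i1 i2 a < Equiv.swap i1 i2 b ↔ a < b := by
  have key : ∀ x : Fin n, ((Equiv.swap i1 i2 x : Fin n) : ℕ)
      = if x = i1 then (i2 : ℕ) else if x = i2 then (i1 : ℕ) else (x : ℕ) := by
    intro x
    rcases eq_or_ne x i1 with h1 | h1
    · simp [h1]
    · rcases eq_or_ne x i2 with h2 | h2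
      · have hne : i2 ≠ i1 := by intro e; exact h1 (h2.trans e)
        simp [h2, Equiv.swap_apply_right, hne]
      · simp [Equiv.swap_apply_of_ne_of_ne h1 h2, h1, h2]
  rw [Fin.lt_def, Fin.lt_def, key a, key b]
  clear key
  simp only [Fin.ext_iff] at h
  split_ifs with h1 h2 h3 h4 h5 h6 h7 h8 <;>
    simp only [Fin.ext_iff] at * <;> omega

lemma invCount_mul_swap {n : ℕ} {i1 i2 : Fin n} (hi : (i2 : ℕ) = (i1 : ℕ) + 1)
    (w : Equiv.Perm (Fin n)) (hw : w i1 < w i2) :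
    invCount n (w * Equiv.swap i1 i2) = invCount n w + 1 := by
  classical
  set s := Equiv.swap i1 i2 with hs
  have hi12 : i1 < i2 := by rw [Fin.lt_def]; omega
  have hne : i1 ≠ i2 := ne_of_lt hi12
  have hss : ∀ x, s (s x) = x := fun x => Equiv.swap_apply_self _ _ x
  set σ : Fin n × Fin n → Fin n × Fin n := fun p => (s p.1, s p.2) with hσ
  have hσinj : Function.Injective σ := fun p p' h => by
    simp only [hσ, Prod.ext_iff] at h ⊢
    exact ⟨s.injective h.1, s.injective h.2⟩
  have hset : (Finset.univ.filter
      (fun p : Fin n × Fin n => p.1 < p.2 ∧ (w * s) p.2 < (w * s) p.1))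
      = insert (i1, i2) ((Finset.univ.filter
          (fun p : Fin n × Fin n => p.1 < p.2 ∧ w p.2 < w p.1)).image σ) := by
    ext ⟨a, b⟩
    simp only [Finset.mem_insert, Finset.mem_image, Finset.mem_filter, Finset.mem_univ,
      true_and, Prod.ext_iff]
    simp only [Equiv.Perm.mul_apply]
    constructor
    · rintro ⟨hab, hvw⟩
      by_cases hsp : (a = i1 ∨ a = i2) ∧ (b = i1 ∨ b = i2)
      · -- both in {i1,i2}; with a < b forces (a,b) = (i1,i2)
        left
        rcases hsp with ⟨ha, hb⟩
        rcases ha with ha | ha <;> rcases hb with hb | hb <;> subst ha <;> subst hb <;>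
          first
            | exact ⟨rfl, rfl⟩
            | (exact absurd hab (lt_irrefl _))
            | (exact absurd hab (not_lt_of_gt hi12))
      · right
        refine ⟨(s a, s b), ⟨?_, ?_⟩, hss a, hss b⟩
        · dsimp only
          have : ¬((s a = i1 ∨ s a = i2) ∧ (s b = i1 ∨ s b = i2)) := by
            intro ⟨h1, h2⟩
            apply hsp
            constructor
            · rcases h1 with h1 | h1
              · right; rw [← hss a, h1, hs, Equiv.swap_apply_left]
              · left; rw [← hss a, h1, hs, Equiv.swap_apply_right]
            · rcases h2 with h2 | h2
              · right; rw [← hss b, h2, hs, Equiv.swap_apply_left]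
              · left; rw [← hss b, h2, hs, Equiv.swap_apply_right]
          have hiff := swap_lt_swap_iff hi this
          rw [← hs, hss a, hss b] at hiff
          exact hiff.mp hab
        · dsimp only; exact hvw
    · rintro (⟨ha, hb⟩ | ⟨⟨c, d⟩, ⟨hcd, hv⟩, hca, hdb⟩)
      · subst ha; subst hb
        refine ⟨hi12, ?_⟩
        rw [hs]; simpa [Equiv.swap_apply_left, Equiv.swap_apply_right] using hw
      · subst hca; subst hdb
        rw [hss c, hss d]
        refine ⟨?_, hv⟩
        have : ¬((c = i1 ∨ c = i2) ∧ (d = i1 ∨ d = i2)) := by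
          rintro ⟨h1, h2⟩
          rcases h1 with h1 | h1 <;> rcases h2 with h2 | h2 <;> subst h1 <;> subst h2
          · exact absurd hcd (lt_irrefl _)
          · exact absurd hv (not_lt_of_gt hw)
          · exact absurd hcd (not_lt_of_gt hi12)
          · exact absurd hcd (lt_irrefl _)
        rw [swap_lt_swap_iff hi this]
        exact hcd
  rw [invCount, invCount, hset, Finset.card_insert_of_notMem, Finset.card_image_of_injective _ hσinj]
  intro hmem
  rcases Finset.mem_image.mp hmem with ⟨⟨c, d⟩, hp, he⟩
  simp only [hσ, Prod.ext_iff] at he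
  have hc : c = i2 := by rw [← hss c, he.1, hs, Equiv.swap_apply_left]
  have hd : d = i1 := by rw [← hss d, he.2, hs, Equiv.swap_apply_right]
  subst hc; subst hd
  simp only [Finset.mem_filter] at hp
  exact absurd hp.2.1 (not_lt_of_gt hi12)

lemma invCount_inv {n : ℕ} (w : Equiv.Perm (Fin n)) : invCount n w⁻¹ = invCount n w := by
  classical
  rw [invCount, invCount]
  apply Finset.card_bij' (fun p _ => ((w⁻¹ p.2 : Fin n), (w⁻¹ p.1 : Fin n)))
    (fun p _ => ((w p.2 : Fin n), (w p.1 : Fin n)))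
  · intro ⟨a, b⟩ h
    simp only [Finset.mem_filter, Finset.mem_univ, true_and] at h ⊢
    simpa using ⟨h.2, h.1⟩
  · intro ⟨a, b⟩ h
    simp only [Finset.mem_filter, Finset.mem_univ, true_and] at h ⊢
    simpa using ⟨h.2, h.1⟩
  · intro ⟨a, b⟩ h; simp
  · intro ⟨a, b⟩ h; simp

def phi (n : ℕ) (p : Fin (n + 1)) (σ : Equiv.Perm (Fin n)) : Equiv.Perm (Fin (n + 1)) :=
  (finSuccEquiv' 0).trans ((σ.optionCongr).trans (finSuccEquiv' p).symm)

lemma phi_zero (n : ℕ) (p : Fin (n + 1)) (σ : Equiv.Perm (Fin n)) :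
    phi n p σ 0 = p := by
  simp [phi, finSuccEquiv'_at, finSuccEquiv'_symm_none]

lemma phi_succ (n : ℕ) (p : Fin (n + 1)) (σ : Equiv.Perm (Fin n)) (i : Fin n) :
    phi n p σ i.succ = p.succAbove (σ i) := by
  have h0 : finSuccEquiv' (0 : Fin (n + 1)) i.succ = some i := by
    have : (0 : Fin (n + 1)).succAbove i = i.succ := by
      simp [Fin.succAbove]
    rw [← this, finSuccEquiv'_succAbove]
  simp [phi, h0, finSuccEquiv'_symm_some]

lemma phi_bijective (n : ℕ) :
    Function.Bijective (fun x : Fin (n + 1) × Equiv.Perm (Fin n) => phi n x.1 x.2) := by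
  rw [Fintype.bijective_iff_injective_and_card]
  constructor
  · rintro ⟨p, σ⟩ ⟨p', σ'⟩ h
    simp only at h
    have hp : p = p' := by rw [← phi_zero n p σ, ← phi_zero n p' σ', h]
    subst hp
    have hσ : σ = σ' := by
      ext i
      have := congrArg (fun w : Equiv.Perm (Fin (n+1)) => w i.succ) h
      simp only [phi_succ] at this
      rw [Fin.succAbove_right_injective this]
    rw [hσ]
  · simp [Fintype.card_perm, Nat.factorial_succ]

lemma invCount_phi (n : ℕ) (p : Fin (n + 1)) (σ : Equiv.Perm (Fin n)) :
    invCount (n + 1) (phi n p σ) = (p : ℕ) + invCount n σ := by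
  classical
  set w := phi n p σ with hwdef
  have hw0 : w 0 = p := phi_zero n p σ
  have hws : ∀ i, w i.succ = p.succAbove (σ i) := phi_succ n p σ
  rw [invCount]
  have hsplit := Finset.card_filter_add_card_filter_not
    (s := Finset.univ.filter (fun pr : Fin (n+1) × Fin (n+1) => pr.1 < pr.2 ∧ w pr.2 < w pr.1))
    (p := fun pr => pr.1 = 0)
  rw [Finset.filter_filter, Finset.filter_filter] at hsplit
  rw [← hsplit]
  congr 1
  · -- first part = p
    rw [← Fin.card_Iio (b := p)]
    apply Finset.card_bij (fun pr _ => w pr.2)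
    · intro ⟨a, b⟩ h
      simp only [Finset.mem_filter, Finset.mem_univ, true_and] at h
      obtain ⟨⟨hab, hvw⟩, ha0⟩ := h
      subst ha0
      rw [hw0] at hvw
      simpa [Finset.mem_Iio] using hvw
    · intro ⟨a, b⟩ h ⟨a', b'⟩ h' he
      simp only [Finset.mem_filter, Finset.mem_univ, true_and] at h h'
      have hb : b = b' := w.injective he
      rw [Prod.ext_iff]
      exact ⟨h.2.trans h'.2.symm, hb⟩
    · intro v hv
      simp only [Finset.mem_Iio] at hv
      refine ⟨(0, w⁻¹ v), ?_, by simp⟩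
      simp only [Finset.mem_filter, Finset.mem_univ, true_and]
      have hv0 : w⁻¹ v ≠ 0 := by
        intro e
        have : v = w 0 := by rw [← e]; simp
        rw [hw0] at this
        exact absurd hv (by rw [this]; exact lt_irrefl _)
      refine ⟨⟨Fin.pos_of_ne_zero hv0, ?_⟩, trivial⟩
      rw [hw0]; simpa using hv
  · -- second part = invCount n σ
    rw [invCount]
    symm
    apply Finset.card_bij (fun pr _ => ((pr.1.succ : Fin (n+1)), (pr.2.succ : Fin (n+1))))
    · intro ⟨a, b⟩ h
      simp only [Finset.mem_filter, Finset.mem_univ, true_and] at h ⊢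
      refine ⟨⟨?_, ?_⟩, Fin.succ_ne_zero a⟩
      · exact Fin.succ_lt_succ_iff.mpr h.1
      · rw [hws, hws]
        exact Fin.succAbove_lt_succAbove_iff.mpr h.2
    · intro ⟨a, b⟩ _ ⟨a', b'⟩ _ he
      simp only [Prod.ext_iff] at he ⊢
      exact ⟨Fin.succ_injective _ he.1, Fin.succ_injective _ he.2⟩
    · intro ⟨a, b⟩ h
      simp only [Finset.mem_filter, Finset.mem_univ, true_and] at h
      obtain ⟨⟨hab, hvw⟩, ha0⟩ := h
      obtain ⟨a', ha'⟩ := Fin.exists_succ_eq.mpr ha0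
      have hb0 : b ≠ 0 := by
        intro e
        rw [e] at hab
        exact absurd hab (Fin.not_lt_zero a).elim
      obtain ⟨b', hb'⟩ := Fin.exists_succ_eq.mpr hb0
      refine ⟨(a', b'), ?_, by simp [ha', hb']⟩
      simp only [Finset.mem_filter, Finset.mem_univ, true_and]
      constructor
      · rw [← Fin.succ_lt_succ_iff, ha', hb']; exact hab
      · rw [← Fin.succAbove_lt_succAbove_iff (p := p), ← hws, ← hws, ha', hb']
        exact hvw

lemma sum_q_pow_invCount (q : ℝ) : ∀ n : ℕ,
    ∑ w : Equiv.Perm (Fin n), q ^ invCount n w = qFactorial q n := by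
  intro n
  induction n with
  | zero =>
      rw [qFactorial]
      simp [invCount]
  | succ m ih =>
      rw [← Fintype.sum_bijective _ (phi_bijective m) _ _ (fun x => rfl)]
      rw [Fintype.sum_prod_type]
      simp only [invCount_phi, pow_add]
      rw [← Finset.sum_mul_sum]
      rw [ih, qFactorial, qFactorial, Finset.prod_Icc_succ_top (by omega : 1 ≤ m + 1)]
      rw [Fin.sum_univ_eq_sum_range (fun j => q ^ j) (m + 1)]
      ring

lemma qFactorial_pos {q : ℝ} (hq : 0 < q) (n : ℕ) : 0 < qFactorial q n := by
  rw [qFactorial]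
  apply Finset.prod_pos
  intro i hi
  simp only [Finset.mem_Icc] at hi
  apply Finset.sum_pos (fun j _ => pow_pos hq j)
  exact ⟨0, Finset.mem_range.mpr (by omega)⟩

lemma key_sum {n : ℕ} {q : ℝ} (hq0 : 0 < q) (F : Equiv.Perm (Fin n) → Equiv.Perm (Fin n))
    (X : Equiv.Perm (Fin n) → Prop) [DecidablePred X] (g : Equiv.Perm (Fin n) → ℝ)
    (hFF : ∀ w, F (F w) = w)
    (hFX : ∀ w, X (F w) ↔ ¬ X w)
    (hinv : ∀ w, ¬ X w → invCount n (F w) = invCount n w + 1)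
    (hg : ∀ w, g (F w) = g w) :
    ∑ w : Equiv.Perm (Fin n), q ^ invCount n w * ((if X w then (1:ℝ) else 0) * g w)
      = q / (1 + q) * ∑ w : Equiv.Perm (Fin n), q ^ invCount n w * g w := by
  classical
  set S1 := ∑ w ∈ Finset.univ.filter X, q ^ invCount n w * g w with hS1
  set S0 := ∑ w ∈ Finset.univ.filter (fun w => ¬ X w), q ^ invCount n w * g w with hS0
  have hLHS : ∑ w : Equiv.Perm (Fin n), q ^ invCount n w * ((if X w then (1:ℝ) else 0) * g w)
      = S1 := by
    rw [hS1, Finset.sum_filter]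
    apply Finset.sum_congr rfl
    intro w _
    by_cases h : X w <;> simp [h]
  have htot : ∑ w : Equiv.Perm (Fin n), q ^ invCount n w * g w = S1 + S0 :=
    (Finset.sum_filter_add_sum_filter_not _ _ _).symm
  have hq1 : (1 : ℝ) + q ≠ 0 := by positivity
  have hS1eq : S1 = q * S0 := by
    rw [hS1, hS0, Finset.mul_sum]
    apply Finset.sum_nbij' (i := fun w => F w) (j := fun w => F w)
    · intro w hw
      simp only [Finset.mem_filter, Finset.mem_univ, true_and] at hw ⊢
      rw [hFX]
      simpa using hw
    · intro w hw
      simp only [Finset.mem_filter, Finset.mem_univ, true_and] at hw ⊢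
      exact (hFX w).mpr hw
    · intro w _; exact hFF w
    · intro w _; exact hFF w
    · intro w hw
      simp only [Finset.mem_filter, Finset.mem_univ, true_and] at hw
      have h1 : invCount n w = invCount n (F w) + 1 := by
        have := hinv (F w) (by rw [hFX]; simpa using hw)
        rw [hFF w] at this
        exact this
      rw [h1, hg, pow_succ]
      ring
  rw [hLHS, htot, hS1eq]
  field_simp
  ring

lemma lt_flip {α : Type*} [LinearOrder α] {a b : α} (h : a ≠ b) : a < b ↔ ¬ b < a :=
  ⟨fun h' h'' => absurd h' (not_lt_of_gt h''), fun h' => lt_of_le_of_ne (not_lt.mp h') h⟩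

set_option maxHeartbeats 2000000 in
lemma core_cov {n : ℕ} {q : ℝ} (hq0 : 0 < q) (i1 i2 j1 j2 : Fin n)
    (hi : (i2 : ℕ) = (i1 : ℕ) + 1) (hj : (j2 : ℕ) = (j1 : ℕ) + 1) :
    (∑ w : Equiv.Perm (Fin n), mallows q n w *
        ((if w i2 < w i1 then (1:ℝ) else 0) * (if w⁻¹ j2 < w⁻¹ j1 then (1:ℝ) else 0)))
      - (∑ w : Equiv.Perm (Fin n), mallows q n w * (if w i2 < w i1 then (1:ℝ) else 0))
        * (∑ w : Equiv.Perm (Fin n), mallows q n w * (if w⁻¹ j2 < w⁻¹ j1 then (1:ℝ) else 0))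
    = (q / (1 + q) - q ^ 2 / (1 + q) ^ 2) *
        ∑ w ∈ Finset.univ.filter (fun w : Equiv.Perm (Fin n) =>
            (w i1 = j1 ∧ w i2 = j2) ∨ (w i1 = j2 ∧ w i2 = j1)), mallows q n w := by
  have hne_i : i1 ≠ i2 := by intro e; rw [e] at hi; omega
  have hne_j : j1 ≠ j2 := by intro e; rw [e] at hj; omega
  set R : Equiv.Perm (Fin n) → Equiv.Perm (Fin n) := fun w => w * Equiv.swap i1 i2 with hR
  set L : Equiv.Perm (Fin n) → Equiv.Perm (Fin n) := fun w => Equiv.swap j1 j2 * w with hL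
  have hRi1 : ∀ w, R w i1 = w i2 := fun w => by
    simp [hR, Equiv.Perm.mul_apply, Equiv.swap_apply_left]
  have hRi2 : ∀ w, R w i2 = w i1 := fun w => by
    simp [hR, Equiv.Perm.mul_apply, Equiv.swap_apply_right]
  have hRinvj : ∀ w (j : Fin n), (R w)⁻¹ j = Equiv.swap i1 i2 (w⁻¹ j) := fun w j => by
    simp [hR, Equiv.Perm.mul_apply]
  have hLx : ∀ w (x : Fin n), L w x = Equiv.swap j1 j2 (w x) := fun w x => by
    simp [hL, Equiv.Perm.mul_apply]
  have hLinv1 : ∀ w, (L w)⁻¹ j1 = w⁻¹ j2 := fun w => by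
    simp [hL, Equiv.Perm.mul_apply, Equiv.swap_apply_left]
  have hLinv2 : ∀ w, (L w)⁻¹ j2 = w⁻¹ j1 := fun w => by
    simp [hL, Equiv.Perm.mul_apply, Equiv.swap_apply_right]
  have hwne : ∀ w : Equiv.Perm (Fin n), w i2 ≠ w i1 := fun w e => hne_i (w.injective e).symm
  have hwinvne : ∀ w : Equiv.Perm (Fin n), w⁻¹ j2 ≠ w⁻¹ j1 :=
    fun w e => hne_j (w⁻¹.injective e).symm
  have hRR : ∀ w, R (R w) = w := fun w => by
    rw [hR]; simp [mul_assoc]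
  have hLL : ∀ w, L (L w) = w := fun w => by
    rw [hL]; simp [← mul_assoc]
  have hRX : ∀ w, (fun w : Equiv.Perm (Fin n) => w i2 < w i1) (R w) ↔ ¬ (fun w : Equiv.Perm (Fin n) => w i2 < w i1) w := fun w => by
    simp only [hRi1, hRi2]
    exact lt_flip (hwne w).symm
  have hLY : ∀ w, (fun w : Equiv.Perm (Fin n) => w⁻¹ j2 < w⁻¹ j1) (L w) ↔ ¬ (fun w : Equiv.Perm (Fin n) => w⁻¹ j2 < w⁻¹ j1) w := fun w => by
    simp only [hLinv1, hLinv2]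
    exact lt_flip (hwinvne w).symm
  have hRinvC : ∀ w, ¬ (fun w : Equiv.Perm (Fin n) => w i2 < w i1) w → invCount n (R w) = invCount n w + 1 := fun w hw => by
    apply invCount_mul_swap hi
    exact lt_of_le_of_ne (not_lt.mp hw) (hwne w).symm
  have hLinvC : ∀ w, ¬ (fun w : Equiv.Perm (Fin n) => w⁻¹ j2 < w⁻¹ j1) w → invCount n (L w) = invCount n w + 1 := fun w hw => by
    have h1 : w⁻¹ j1 < w⁻¹ j2 := lt_of_le_of_ne (not_lt.mp hw) (hwinvne w).symm
    have h2 : (L w)⁻¹ = w⁻¹ * Equiv.swap j1 j2 := by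
      rw [hL]; simp [mul_inv_rev]
    calc invCount n (L w) = invCount n (L w)⁻¹ := (invCount_inv _).symm
      _ = invCount n (w⁻¹ * Equiv.swap j1 j2) := by rw [h2]
      _ = invCount n w⁻¹ + 1 := invCount_mul_swap hj w⁻¹ h1
      _ = invCount n w + 1 := by rw [invCount_inv]
  have hRA : ∀ w, (fun w : Equiv.Perm (Fin n) => (w i1 = j1 ∧ w i2 = j2) ∨ (w i1 = j2 ∧ w i2 = j1)) (R w) ↔ (fun w : Equiv.Perm (Fin n) => (w i1 = j1 ∧ w i2 = j2) ∨ (w i1 = j2 ∧ w i2 = j1)) w := fun w => by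
    simp only [hRi1, hRi2]; tauto
  have hLA : ∀ w, (fun w : Equiv.Perm (Fin n) => (w i1 = j1 ∧ w i2 = j2) ∨ (w i1 = j2 ∧ w i2 = j1)) (L w) ↔ (fun w : Equiv.Perm (Fin n) => (w i1 = j1 ∧ w i2 = j2) ∨ (w i1 = j2 ∧ w i2 = j1)) w := fun w => by
    simp only [hLx]
    have e1 : ∀ x : Fin n, Equiv.swap j1 j2 x = j1 ↔ x = j2 := fun x => by
      rw [Equiv.swap_apply_eq_iff, Equiv.swap_apply_left]
    have e2 : ∀ x : Fin n, Equiv.swap j1 j2 x = j2 ↔ x = j1 := fun x => by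
      rw [Equiv.swap_apply_eq_iff, Equiv.swap_apply_right]
    rw [e1, e2, e1, e2]; tauto
  have hAnotboth : ∀ w : Equiv.Perm (Fin n), ¬ (fun w : Equiv.Perm (Fin n) => (w i1 = j1 ∧ w i2 = j2) ∨ (w i1 = j2 ∧ w i2 = j1)) w →
      ¬(((w⁻¹ j2 = i1 ∨ w⁻¹ j2 = i2) ∧ (w⁻¹ j1 = i1 ∨ w⁻¹ j1 = i2))) := by
    intro w hw ⟨h2, h1⟩
    apply hw
    have conv : ∀ (a : Fin n) (b : Fin n), w⁻¹ b = a → w a = b := fun a b h => by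
      rw [← h]; simp
    rcases h1 with h1 | h1 <;> rcases h2 with h2 | h2
    · exact absurd (h2.trans h1.symm) (hwinvne w)
    · exact Or.inl ⟨conv _ _ h1, conv _ _ h2⟩
    · exact Or.inr ⟨conv _ _ h2, conv _ _ h1⟩
    · exact absurd (h2.trans h1.symm) (hwinvne w)
  have hRY : ∀ w, ¬ (fun w : Equiv.Perm (Fin n) => (w i1 = j1 ∧ w i2 = j2) ∨ (w i1 = j2 ∧ w i2 = j1)) w → ((fun w : Equiv.Perm (Fin n) => w⁻¹ j2 < w⁻¹ j1) (R w) ↔ (fun w : Equiv.Perm (Fin n) => w⁻¹ j2 < w⁻¹ j1) w) := fun w hw => by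
    simp only [hRinvj]
    exact swap_lt_swap_iff hi (hAnotboth w hw)
  have hAXY : ∀ w, (fun w : Equiv.Perm (Fin n) => (w i1 = j1 ∧ w i2 = j2) ∨ (w i1 = j2 ∧ w i2 = j1)) w → ((fun w : Equiv.Perm (Fin n) => w i2 < w i1) w ↔ (fun w : Equiv.Perm (Fin n) => w⁻¹ j2 < w⁻¹ j1) w) := by
    intro w hw
    have conv : ∀ (a : Fin n) (b : Fin n), w a = b → w⁻¹ b = a := fun a b h => by
      rw [← h]; simp
    show w i2 < w i1 ↔ w⁻¹ j2 < w⁻¹ j1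
    rcases hw with ⟨h1, h2⟩ | ⟨h1, h2⟩
    · rw [h1, h2, conv _ _ h1, conv _ _ h2]
      constructor
      · intro h; exact absurd h (by rw [Fin.lt_def]; omega)
      · intro h; exact absurd h (by rw [Fin.lt_def]; omega)
    · rw [h1, h2, conv _ _ h1, conv _ _ h2]
      constructor
      · intro _; rw [Fin.lt_def]; omega
      · intro _; rw [Fin.lt_def]; omega
  set Z := qFactorial q n with hZ
  have hZpos : 0 < Z := qFactorial_pos hq0 n
  set r := q / (1 + q) with hr
  set SA := ∑ w ∈ Finset.univ.filter (fun w : Equiv.Perm (Fin n) => (w i1 = j1 ∧ w i2 = j2) ∨ (w i1 = j2 ∧ w i2 = j1)), q ^ invCount n w with hSA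
  have hindA : ∑ w : Equiv.Perm (Fin n), q ^ invCount n w *
      (if (w i1 = j1 ∧ w i2 = j2) ∨ (w i1 = j2 ∧ w i2 = j1) then (1:ℝ) else 0) = SA := by
    rw [hSA, Finset.sum_filter]
    refine Finset.sum_congr rfl (fun w _ => ?_)
    by_cases h : (w i1 = j1 ∧ w i2 = j2) ∨ (w i1 = j2 ∧ w i2 = j1) <;> simp [h]
  have hindAc : ∑ w : Equiv.Perm (Fin n), q ^ invCount n w *
      (if ¬ ((w i1 = j1 ∧ w i2 = j2) ∨ (w i1 = j2 ∧ w i2 = j1)) then (1:ℝ) else 0)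
      = Z - SA := by
    have step : ∀ w : Equiv.Perm (Fin n),
        q ^ invCount n w *
          (if ¬ ((w i1 = j1 ∧ w i2 = j2) ∨ (w i1 = j2 ∧ w i2 = j1)) then (1:ℝ) else 0)
          = q ^ invCount n w - q ^ invCount n w *
            (if (w i1 = j1 ∧ w i2 = j2) ∨ (w i1 = j2 ∧ w i2 = j1) then (1:ℝ) else 0) := by
      intro w
      by_cases h : (w i1 = j1 ∧ w i2 = j2) ∨ (w i1 = j2 ∧ w i2 = j1) <;> simp [h]
    rw [Finset.sum_congr rfl (fun w _ => step w), Finset.sum_sub_distrib, hindA,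
      sum_q_pow_invCount q n]
  have hT1 : ∑ w : Equiv.Perm (Fin n), q ^ invCount n w *
      (if w i2 < w i1 then (1:ℝ) else 0) = r * Z := by
    have h := key_sum hq0 R (fun w : Equiv.Perm (Fin n) => w i2 < w i1) (fun _ => (1:ℝ)) hRR hRX hRinvC (fun _ => rfl)
    simp only [mul_one] at h
    rw [h, sum_q_pow_invCount q n]
  have hT2 : ∑ w : Equiv.Perm (Fin n), q ^ invCount n w *
      (if w⁻¹ j2 < w⁻¹ j1 then (1:ℝ) else 0) = r * Z := by
    have h := key_sum hq0 L (fun w : Equiv.Perm (Fin n) => w⁻¹ j2 < w⁻¹ j1) (fun _ => (1:ℝ)) hLL hLY hLinvC (fun _ => rfl)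
    simp only [mul_one] at h
    rw [h, sum_q_pow_invCount q n]
  have hT3a : ∑ w : Equiv.Perm (Fin n), q ^ invCount n w *
      ((if w i2 < w i1 then (1:ℝ) else 0) *
        (if (w i1 = j1 ∧ w i2 = j2) ∨ (w i1 = j2 ∧ w i2 = j1) then (1:ℝ) else 0))
      = r * SA := by
    rw [key_sum hq0 R (fun w : Equiv.Perm (Fin n) => w i2 < w i1)
      (fun w => if (w i1 = j1 ∧ w i2 = j2) ∨ (w i1 = j2 ∧ w i2 = j1) then (1:ℝ) else 0)
      hRR hRX hRinvC (fun w => by simp only [hRi1, hRi2]; exact if_congr (by tauto) rfl rfl), hindA]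
  have hT3b : ∑ w : Equiv.Perm (Fin n), q ^ invCount n w *
      ((if w i2 < w i1 then (1:ℝ) else 0) *
        (if ¬ ((w i1 = j1 ∧ w i2 = j2) ∨ (w i1 = j2 ∧ w i2 = j1)) ∧ w⁻¹ j2 < w⁻¹ j1
          then (1:ℝ) else 0))
      = r * (r * (Z - SA)) := by
    rw [key_sum hq0 R (fun w : Equiv.Perm (Fin n) => w i2 < w i1)
      (fun w => if ¬ ((w i1 = j1 ∧ w i2 = j2) ∨ (w i1 = j2 ∧ w i2 = j1)) ∧ w⁻¹ j2 < w⁻¹ j1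
        then (1:ℝ) else 0)
      hRR hRX hRinvC ?_]
    · congr 1
      have step : ∀ w : Equiv.Perm (Fin n),
          q ^ invCount n w *
            (if ¬ ((w i1 = j1 ∧ w i2 = j2) ∨ (w i1 = j2 ∧ w i2 = j1)) ∧ w⁻¹ j2 < w⁻¹ j1
              then (1:ℝ) else 0)
            = q ^ invCount n w * ((if w⁻¹ j2 < w⁻¹ j1 then (1:ℝ) else 0) *
                (if ¬ ((w i1 = j1 ∧ w i2 = j2) ∨ (w i1 = j2 ∧ w i2 = j1)) then (1:ℝ) else 0)) := by
        intro w
        by_cases h1 : (w i1 = j1 ∧ w i2 = j2) ∨ (w i1 = j2 ∧ w i2 = j1) <;>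
          by_cases h2 : w⁻¹ j2 < w⁻¹ j1 <;> simp [h1, h2]
      rw [Finset.sum_congr rfl (fun w _ => step w),
        key_sum hq0 L (fun w : Equiv.Perm (Fin n) => w⁻¹ j2 < w⁻¹ j1)
          (fun w => if ¬ ((w i1 = j1 ∧ w i2 = j2) ∨ (w i1 = j2 ∧ w i2 = j1)) then (1:ℝ) else 0)
          hLL hLY hLinvC (fun w => by
            simp only [hLx]
            refine if_congr ?_ rfl rfl
            have e1 : ∀ x : Fin n, Equiv.swap j1 j2 x = j1 ↔ x = j2 := fun x => by
              rw [Equiv.swap_apply_eq_iff, Equiv.swap_apply_left]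
            have e2 : ∀ x : Fin n, Equiv.swap j1 j2 x = j2 ↔ x = j1 := fun x => by
              rw [Equiv.swap_apply_eq_iff, Equiv.swap_apply_right]
            rw [e1, e2, e1, e2]; tauto),
        hindAc]
    · intro w
      by_cases hAw : (w i1 = j1 ∧ w i2 = j2) ∨ (w i1 = j2 ∧ w i2 = j1)
      · have h1 : (R w i1 = j1 ∧ R w i2 = j2) ∨ (R w i1 = j2 ∧ R w i2 = j1) := (hRA w).mpr hAw
        simp [hAw, h1]
      · have h1 : ¬ ((R w i1 = j1 ∧ R w i2 = j2) ∨ (R w i1 = j2 ∧ R w i2 = j1)) :=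
          fun h => hAw ((hRA w).mp h)
        by_cases hy : w⁻¹ j2 < w⁻¹ j1
        · have h2 : (R w)⁻¹ j2 < (R w)⁻¹ j1 := (hRY w hAw).mpr hy
          simp only [Equiv.Perm.inv_def] at h2 hy
          simp [hAw, h1, hy, h2]
        · have h2 : ¬ ((R w)⁻¹ j2 < (R w)⁻¹ j1) := fun h => hy ((hRY w hAw).mp h)
          simp only [Equiv.Perm.inv_def] at h2 hy
          simp [hAw, h1, hy, h2]
  have hT3 : ∑ w : Equiv.Perm (Fin n), q ^ invCount n w *
      ((if w i2 < w i1 then (1:ℝ) else 0) * (if w⁻¹ j2 < w⁻¹ j1 then (1:ℝ) else 0))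
      = r * SA + r * (r * (Z - SA)) := by
    rw [← hT3a, ← hT3b, ← Finset.sum_add_distrib]
    refine Finset.sum_congr rfl (fun w _ => ?_)
    rw [← mul_add]
    congr 1
    by_cases hAw : (w i1 = j1 ∧ w i2 = j2) ∨ (w i1 = j2 ∧ w i2 = j1)
    · have hxy := hAXY w hAw
      by_cases hx : w i2 < w i1
      · have hxy' := hxy.mp hx
        simp only [Equiv.Perm.inv_def] at hxy'
        simp [hx, hAw, hxy']
      · simp [hx, hAw]
    · by_cases hy : w⁻¹ j2 < w⁻¹ j1 <;> simp [hAw, hy]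
  have hmal : ∀ (f : Equiv.Perm (Fin n) → ℝ),
      ∑ w : Equiv.Perm (Fin n), mallows q n w * f w
        = (∑ w : Equiv.Perm (Fin n), q ^ invCount n w * f w) / Z := by
    intro f
    rw [Finset.sum_div]
    exact Finset.sum_congr rfl (fun w _ => by rw [mallows, div_mul_eq_mul_div])
  have hSAfilter : ∑ w ∈ Finset.univ.filter (fun w : Equiv.Perm (Fin n) =>
      (w i1 = j1 ∧ w i2 = j2) ∨ (w i1 = j2 ∧ w i2 = j1)), mallows q n w = SA / Z := by
    rw [hSA, Finset.sum_div]
    exact Finset.sum_congr rfl (fun w _ => by rw [mallows])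
  rw [hmal, hmal, hmal, hT1, hT2, hT3, hSAfilter]
  have hZne : Z ≠ 0 := ne_of_gt hZpos
  have h1q : (1 : ℝ) + q ≠ 0 := by positivity
  rw [hr]
  field_simp
  ring

lemma desCount_eq_sum (n : ℕ) (w : Equiv.Perm (Fin n)) :
    (desCount n w : ℝ) = ∑ c ∈ (Finset.univ : Finset (Fin n × Fin n)).filter
        (fun p => (p.2 : ℕ) = (p.1 : ℕ) + 1),
      (if w c.2 < w c.1 then (1:ℝ) else 0) := by
  rw [desCount, Finset.card_filter]
  push_cast
  rw [Finset.sum_filter]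
  refine Finset.sum_congr rfl (fun c _ => ?_)
  by_cases h1 : (c.2 : ℕ) = (c.1 : ℕ) + 1 <;> by_cases h2 : w c.2 < w c.1 <;> simp [h1, h2]

/-- For `q ∈ (0,1)` and `n ≥ 2`, with `w` Mallows distributed on `S_n`,
`Cov(des(w), des(w⁻¹)) = (q/(1+q) - q²/(1+q)²) · ∑_{i,j} P({w(i), w(i+1)} = {j, j+1})`,
where the sum is over positions `i` and values `j` (each with a successor); in particular
the covariance is non-negative. -/
theorem stmt_19 (n : ℕ) (hn : 2 ≤ n) (q : ℝ) (hq0 : 0 < q) (hq1 : q < 1) :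
    ((∑ w : Equiv.Perm (Fin n),
        mallows q n w * ((desCount n w : ℝ) * (desCount n w⁻¹ : ℝ)))
      - (∑ w : Equiv.Perm (Fin n), mallows q n w * (desCount n w : ℝ))
        * (∑ w : Equiv.Perm (Fin n), mallows q n w * (desCount n w⁻¹ : ℝ))
    = (q / (1 + q) - q ^ 2 / (1 + q) ^ 2) *
        ∑ p ∈ (Finset.univ : Finset ((Fin n × Fin n) × (Fin n × Fin n))).filter
            (fun p => (p.1.2 : ℕ) = (p.1.1 : ℕ) + 1 ∧ (p.2.2 : ℕ) = (p.2.1 : ℕ) + 1),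
          ∑ w ∈ Finset.univ.filter
              (fun w : Equiv.Perm (Fin n) =>
                (w p.1.1 = p.2.1 ∧ w p.1.2 = p.2.2) ∨
                (w p.1.1 = p.2.2 ∧ w p.1.2 = p.2.1)),
            mallows q n w) ∧
    0 ≤ (∑ w : Equiv.Perm (Fin n),
        mallows q n w * ((desCount n w : ℝ) * (desCount n w⁻¹ : ℝ)))
      - (∑ w : Equiv.Perm (Fin n), mallows q n w * (desCount n w : ℝ))
        * (∑ w : Equiv.Perm (Fin n), mallows q n w * (desCount n w⁻¹ : ℝ)) := by
  set C : Finset (Fin n × Fin n) :=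
    (Finset.univ : Finset (Fin n × Fin n)).filter
      (fun p => (p.2 : ℕ) = (p.1 : ℕ) + 1) with hC
  have hsum1 : ∑ w : Equiv.Perm (Fin n),
      mallows q n w * ((desCount n w : ℝ) * (desCount n w⁻¹ : ℝ))
      = ∑ c ∈ C, ∑ d ∈ C, ∑ w : Equiv.Perm (Fin n),
          mallows q n w * ((if w c.2 < w c.1 then (1:ℝ) else 0)
            * (if w⁻¹ d.2 < w⁻¹ d.1 then (1:ℝ) else 0)) := by
    calc ∑ w : Equiv.Perm (Fin n),
        mallows q n w * ((desCount n w : ℝ) * (desCount n w⁻¹ : ℝ))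
        = ∑ w : Equiv.Perm (Fin n), ∑ c ∈ C, ∑ d ∈ C,
            mallows q n w * ((if w c.2 < w c.1 then (1:ℝ) else 0)
              * (if w⁻¹ d.2 < w⁻¹ d.1 then (1:ℝ) else 0)) := by
          refine Finset.sum_congr rfl (fun w _ => ?_)
          rw [desCount_eq_sum n w, desCount_eq_sum n w⁻¹, Finset.sum_mul_sum, Finset.mul_sum]
          exact Finset.sum_congr rfl (fun c _ => Finset.mul_sum _ _ _)
      _ = ∑ c ∈ C, ∑ w : Equiv.Perm (Fin n), ∑ d ∈ C,
            mallows q n w * ((if w c.2 < w c.1 then (1:ℝ) else 0)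
              * (if w⁻¹ d.2 < w⁻¹ d.1 then (1:ℝ) else 0)) := Finset.sum_comm
      _ = ∑ c ∈ C, ∑ d ∈ C, ∑ w : Equiv.Perm (Fin n),
            mallows q n w * ((if w c.2 < w c.1 then (1:ℝ) else 0)
              * (if w⁻¹ d.2 < w⁻¹ d.1 then (1:ℝ) else 0)) :=
          Finset.sum_congr rfl (fun c _ => Finset.sum_comm)
  have hsum2 : ∑ w : Equiv.Perm (Fin n), mallows q n w * (desCount n w : ℝ)
      = ∑ c ∈ C, ∑ w : Equiv.Perm (Fin n),
          mallows q n w * (if w c.2 < w c.1 then (1:ℝ) else 0) := by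
    rw [Finset.sum_congr rfl (fun w _ => by
      rw [desCount_eq_sum n w, Finset.mul_sum])]
    exact Finset.sum_comm
  have hsum3 : ∑ w : Equiv.Perm (Fin n), mallows q n w * (desCount n w⁻¹ : ℝ)
      = ∑ d ∈ C, ∑ w : Equiv.Perm (Fin n),
          mallows q n w * (if w⁻¹ d.2 < w⁻¹ d.1 then (1:ℝ) else 0) := by
    rw [Finset.sum_congr rfl (fun w _ => by
      rw [desCount_eq_sum n w⁻¹, Finset.mul_sum])]
    exact Finset.sum_comm
  have hfilt : (Finset.univ : Finset ((Fin n × Fin n) × (Fin n × Fin n))).filter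
      (fun p => (p.1.2 : ℕ) = (p.1.1 : ℕ) + 1 ∧ (p.2.2 : ℕ) = (p.2.1 : ℕ) + 1)
      = C ×ˢ C := by
    ext p
    simp [hC, Finset.mem_product]
  have heq : (∑ w : Equiv.Perm (Fin n),
      mallows q n w * ((desCount n w : ℝ) * (desCount n w⁻¹ : ℝ)))
      - (∑ w : Equiv.Perm (Fin n), mallows q n w * (desCount n w : ℝ))
        * (∑ w : Equiv.Perm (Fin n), mallows q n w * (desCount n w⁻¹ : ℝ))
    = (q / (1 + q) - q ^ 2 / (1 + q) ^ 2) *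
        ∑ p ∈ (Finset.univ : Finset ((Fin n × Fin n) × (Fin n × Fin n))).filter
            (fun p => (p.1.2 : ℕ) = (p.1.1 : ℕ) + 1 ∧ (p.2.2 : ℕ) = (p.2.1 : ℕ) + 1),
          ∑ w ∈ Finset.univ.filter
              (fun w : Equiv.Perm (Fin n) =>
                (w p.1.1 = p.2.1 ∧ w p.1.2 = p.2.2) ∨
                (w p.1.1 = p.2.2 ∧ w p.1.2 = p.2.1)),
            mallows q n w := by
    rw [hsum1, hsum2, hsum3, Finset.sum_mul_sum, ← Finset.sum_sub_distrib,
      hfilt, Finset.sum_product, Finset.mul_sum]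
    refine Finset.sum_congr rfl (fun c hc => ?_)
    rw [← Finset.sum_sub_distrib, Finset.mul_sum]
    refine Finset.sum_congr rfl (fun d hd => ?_)
    have hci : (c.2 : ℕ) = (c.1 : ℕ) + 1 := (Finset.mem_filter.mp hc).2
    have hdi : (d.2 : ℕ) = (d.1 : ℕ) + 1 := (Finset.mem_filter.mp hd).2
    exact core_cov hq0 c.1 c.2 d.1 d.2 hci hdi
  refine ⟨heq, ?_⟩
  rw [heq]
  have hc : q / (1 + q) - q ^ 2 / (1 + q) ^ 2 = q / (1 + q) ^ 2 := by
    have h1q : (1 : ℝ) + q ≠ 0 := by positivity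
    field_simp
    ring
  rw [hc]
  apply mul_nonneg
  · positivity
  · refine Finset.sum_nonneg (fun p _ => Finset.sum_nonneg (fun w _ => ?_))
    rw [mallows]
    have := qFactorial_pos hq0 n
    positivity
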